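/- arXiv:2203.13377 — 3 statements merged into one kernel-verified Lean document; each statement's English description precedes it below -/
import Mathlib

section
/- Let ψ : X^n → ℝ^d be a function whose L1 global sensitivity ∇_{ψ,1} = sup over neighboring datasets x_{1:n}, x'_{1:n} of ‖ψ(x_{1:n}) − ψ(x'_{1:n})‖_1 is finite, and let ε > 0. Then the randomized algorithm A(x_{1:n}) = ψ(x_{1:n}) + V, where the coordinates V_1, …, V_d are independent with each V_i distributed as Laplace with scale ∇_{ψ,1}/ε, is ε-differentially private: for every pair of neighboring datasets x_{1:n}, x'_{1:n} and every measurable set O ⊆ ℝ^d, P[A(x_{1:n}) ∈ O] ≤ e^ε · P[A(x'_{1:n}) ∈ O]. -/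
open MeasureTheory

/-- Two datasets are neighbors if they differ in exactly one entry. -/
def Neighbor {X : Type*} {n : ℕ} (x x' : Fin n → X) : Prop :=
  ∃ i, x i ≠ x' i ∧ ∀ j, j ≠ i → x j = x' j

/-- The joint law of `d` independent Laplace random variables with scale `b`,
given by its density with respect to Lebesgue measure on `ℝ^d`. -/
noncomputable def laplacePi (b : ℝ) (d : ℕ) : Measure (Fin d → ℝ) :=
  volume.withDensity fun v => ENNReal.ofReal (∏ i, 1 / (2 * b) * Real.exp (-|v i| / b))

lemma laplacePi_map_apply (b : ℝ) (d : ℕ) (z : Fin d → ℝ) {O : Set (Fin d → ℝ)}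
    (hO : MeasurableSet O) :
    ((laplacePi b d).map fun v i => z i + v i) O
      = ∫⁻ y in O, ENNReal.ofReal (∏ i, 1 / (2 * b) * Real.exp (-|y i - z i| / b)) := by
  have hmeas : ∀ w : Fin d → ℝ, Measurable fun y : Fin d → ℝ =>
      ENNReal.ofReal (∏ i, 1 / (2 * b) * Real.exp (-|y i - w i| / b)) := by
    intro w
    apply Measurable.ennreal_ofReal
    apply Finset.measurable_prod
    intro i _
    exact (Real.measurable_exp.comp ((show Measurable fun a : Fin d → ℝ => -|a i - w i| by fun_prop).div_const b)).const_mul _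
  have hT : MeasurePreserving (fun v : Fin d → ℝ => z + v) volume volume :=
    measurePreserving_add_left volume z
  have hTe : (fun v : Fin d → ℝ => fun i => z i + v i) = fun v => z + v := rfl
  have hTm : Measurable fun v : Fin d → ℝ => z + v := measurable_const_add z
  rw [hTe, laplacePi, Measure.map_apply hTm hO,
    withDensity_apply _ (hTm hO), ← lintegral_indicator (hTm hO)]
  have : ∀ v : Fin d → ℝ,
      ((fun v : Fin d → ℝ => z + v) ⁻¹' O).indicator
        (fun v => ENNReal.ofReal (∏ i, 1 / (2 * b) * Real.exp (-|v i| / b))) v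
      = O.indicator (fun y => ENNReal.ofReal
          (∏ i, 1 / (2 * b) * Real.exp (-|y i - z i| / b))) (z + v) := by
    intro v
    by_cases h : z + v ∈ O
    · rw [Set.indicator_of_mem (show v ∈ (fun v : Fin d → ℝ => z + v) ⁻¹' O from h),
        Set.indicator_of_mem h]
      congr 1
      refine Finset.prod_congr rfl fun i _ => ?_
      have : (z + v) i - z i = v i := by simp
      rw [this]
    · rw [Set.indicator_of_notMem (show v ∉ (fun v : Fin d → ℝ => z + v) ⁻¹' O from h),
        Set.indicator_of_notMem h]
  rw [lintegral_congr this, hT.lintegral_comp ((hmeas z).indicator hO),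
    lintegral_indicator hO]

/-- The Laplace mechanism, adding i.i.d. Laplace noise of scale `Δ/ε` to each coordinate of
`ψ(x_{1:n})`, where `Δ` bounds the L1 sensitivity of `ψ`, is `ε`-differentially private. -/
theorem laplace_mechanism_differentially_private
    {X : Type*} {n d : ℕ} (ψ : (Fin n → X) → Fin d → ℝ)
    (Δ : ℝ) (hΔ : 0 ≤ Δ)
    (hsens : ∀ x x' : Fin n → X, Neighbor x x' → ∑ i, |ψ x i - ψ x' i| ≤ Δ)
    (ε : ℝ) (hε : 0 < ε)
    (A : (Fin n → X) → Measure (Fin d → ℝ))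
    (hA : ∀ x, A x = (laplacePi (Δ / ε) d).map fun v i => ψ x i + v i) :
    ∀ x x' : Fin n → X, Neighbor x x' → ∀ O : Set (Fin d → ℝ), MeasurableSet O →
      A x O ≤ ENNReal.ofReal (Real.exp ε) * A x' O := by
  intro x x' hnb O hO
  have hexp1 : (1 : ENNReal) ≤ ENNReal.ofReal (Real.exp ε) := by
    rw [show (1:ENNReal) = ENNReal.ofReal 1 by simp]
    exact ENNReal.ofReal_le_ofReal (by linarith [Real.add_one_le_exp ε])
  rcases eq_or_lt_of_le hΔ with hΔ0 | hΔpos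
  · -- Δ = 0 : ψ x = ψ x'
    have hsum := hsens x x' hnb
    rw [← hΔ0] at hsum
    have hzero : ∀ i, |ψ x i - ψ x' i| = 0 := by
      intro i
      have := Finset.sum_eq_zero_iff_of_nonneg (fun i _ => abs_nonneg (ψ x i - ψ x' i)) |>.mp
        (le_antisymm hsum (Finset.sum_nonneg fun i _ => abs_nonneg _))
      exact this i (Finset.mem_univ i)
    have hψ : ψ x = ψ x' := by
      funext i; have := abs_eq_zero.mp (hzero i); linarith
    rw [hA x, hA x', hψ]
    exact le_mul_of_one_le_left (by simp) hexp1
  · set b := Δ / ε with hb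
    have hbpos : 0 < b := div_pos hΔpos hε
    have hmeas : ∀ w : Fin d → ℝ, Measurable fun y : Fin d → ℝ =>
        ENNReal.ofReal (∏ i, 1 / (2 * b) * Real.exp (-|y i - w i| / b)) := by
      intro w
      apply Measurable.ennreal_ofReal
      apply Finset.measurable_prod
      intro i _
      exact (Real.measurable_exp.comp ((show Measurable fun a : Fin d → ℝ => -|a i - w i| by fun_prop).div_const b)).const_mul _
    have hpt : ∀ y : Fin d → ℝ,
        ENNReal.ofReal (∏ i, 1 / (2 * b) * Real.exp (-|y i - ψ x i| / b))
          ≤ ENNReal.ofReal (Real.exp ε) *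
            ENNReal.ofReal (∏ i, 1 / (2 * b) * Real.exp (-|y i - ψ x' i| / b)) := by
      intro y
      rw [← ENNReal.ofReal_mul (Real.exp_nonneg ε)]
      apply ENNReal.ofReal_le_ofReal
      have hprod : ∀ w : Fin d → ℝ, ∏ i, 1 / (2 * b) * Real.exp (-|y i - w i| / b)
          = (1 / (2 * b)) ^ d * Real.exp (∑ i, -|y i - w i| / b) := by
        intro w
        rw [Finset.prod_mul_distrib, Finset.prod_const, Real.exp_sum]
        simp
      rw [hprod, hprod,
        show Real.exp ε * ((1 / (2 * b)) ^ d * Real.exp (∑ i, -|y i - ψ x' i| / b))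
          = (1 / (2 * b)) ^ d * Real.exp (ε + ∑ i, -|y i - ψ x' i| / b) by
            rw [Real.exp_add]; ring]
      apply mul_le_mul_of_nonneg_left _ (pow_nonneg (by positivity) d)
      apply Real.exp_le_exp.mpr
      set Sx := ∑ i, |y i - ψ x i| with hSx
      set Sx' := ∑ i, |y i - ψ x' i| with hSx'
      have hS : Sx' - Sx ≤ Δ := by
        rw [hSx, hSx', ← Finset.sum_sub_distrib]
        calc ∑ i, (|y i - ψ x' i| - |y i - ψ x i|)
            ≤ ∑ i, |ψ x i - ψ x' i| := by
              apply Finset.sum_le_sum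
              intro i _
              have h1 := abs_sub_abs_le_abs_sub (y i - ψ x' i) (y i - ψ x i)
              have h2 : (y i - ψ x' i) - (y i - ψ x i) = ψ x i - ψ x' i := by ring
              rw [h2] at h1
              exact h1
          _ ≤ Δ := hsens x x' hnb
      have hdb : Δ / b = ε := by
        rw [hb]; field_simp
      have hfrac : (Sx' - Sx) / b ≤ ε := by
        rw [← hdb]
        exact (div_le_div_iff_of_pos_right hbpos).mpr hS
      have e1 : ∑ i, -|y i - ψ x i| / b = -Sx / b := by
        rw [hSx, ← Finset.sum_div, ← Finset.sum_neg_distrib]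
      have e2 : ∑ i, -|y i - ψ x' i| / b = -Sx' / b := by
        rw [hSx', ← Finset.sum_div, ← Finset.sum_neg_distrib]
      rw [e1, e2]
      have hsplit : (Sx' - Sx) / b = Sx' / b - Sx / b := sub_div _ _ _
      have hn1 : -Sx / b = -(Sx / b) := neg_div _ _
      have hn2 : -Sx' / b = -(Sx' / b) := neg_div _ _
      linarith
    rw [hA x, hA x', laplacePi_map_apply b d (ψ x) hO, laplacePi_map_apply b d (ψ x') hO,
      ← lintegral_const_mul _ (hmeas (ψ x'))]
    exact lintegral_mono fun y => hpt y
end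

section
/- Let η be a probability density on Θ, let μ be a probability density on a space Z, let q(θ'|θ) be a Markov transition density on Θ, let R(z'|z) be a Markov transition density on Z, and let h(y | z, θ) be a strictly positive measurable function. Fix y, N ≥ 1, θ ∈ Θ, and z⁽¹⁾ ∈ Z, and define π(θ, θ', z⁽¹⁾,…,z⁽ᴺ⁾, k) = η(θ) μ(z⁽¹⁾) h(y | z⁽¹⁾, θ) q(θ'|θ) ∏_{i=2}^N R(z⁽ⁱ⁾ | z⁽¹⁾) · h(y | z⁽ᵏ⁾, θ') / Σ_{k'=1}^N h(y | z⁽ᵏ'⁾, θ'). Then integrating out θ' over Θ, z⁽²⁾,…,z⁽ᴺ⁾ over Z, and summing over k ∈ {1,…,N} recovers the unnormalized target: ∫_Θ ∫_{Z^{N−1}} Σ_{k=1}^N π(θ, θ', z⁽¹⁾,…,z⁽ᴺ⁾, k) dz⁽²⁾⋯dz⁽ᴺ⁾ dθ' = η(θ) μ(z⁽¹⁾) h(y | z⁽¹⁾, θ). -/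
open MeasureTheory

/-- Marginalization identity underlying the MHAAR algorithm (with `N = m + 1 ≥ 1` copies of
the auxiliary variable, coordinate `0` playing the role of `z⁽¹⁾`): integrating the extended
density over `θ'`, the refreshed copies `z⁽²⁾, …, z⁽ᴺ⁾`, and the index `k` recovers the
unnormalized target `η(θ) μ(z⁽¹⁾) h(y | z⁽¹⁾, θ)`. -/
theorem mhaar_marginalization
    {Θ Z Y : Type*} [MeasurableSpace Θ] [MeasurableSpace Z]
    (νΘ : Measure Θ) (νZ : Measure Z) [SigmaFinite νΘ] [SigmaFinite νZ]
    (η : Θ → ℝ) (μ : Z → ℝ) (q : Θ → Θ → ℝ) (R : Z → Z → ℝ)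
    (h : Y → Z → Θ → ℝ)
    (hη0 : ∀ θ, 0 ≤ η θ) (hηint : Integrable η νΘ) (hη1 : ∫ θ, η θ ∂νΘ = 1)
    (hμ0 : ∀ z, 0 ≤ μ z) (hμint : Integrable μ νZ) (hμ1 : ∫ z, μ z ∂νZ = 1)
    (hq0 : ∀ θ θ', 0 ≤ q θ θ') (hqm : ∀ θ, Measurable (q θ))
    (hqint : ∀ θ, Integrable (q θ) νΘ) (hq1 : ∀ θ, ∫ θ', q θ θ' ∂νΘ = 1)
    (hR0 : ∀ z z', 0 ≤ R z z') (hRm : ∀ z, Measurable (R z))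
    (hRint : ∀ z, Integrable (R z) νZ) (hR1 : ∀ z, ∫ z', R z z' ∂νZ = 1)
    (hpos : ∀ y z θ, 0 < h y z θ)
    (y : Y) (m : ℕ) (θ : Θ) (z1 : Z) :
    (∫ θ', ∫ t : Fin m → Z,
        ∑ k : Fin (m + 1),
          η θ * μ z1 * h y z1 θ * q θ θ' * (∏ i, R z1 (t i)) *
            h y ((Fin.cons z1 t : Fin (m + 1) → Z) k) θ' / ∑ k' : Fin (m + 1), h y ((Fin.cons z1 t : Fin (m + 1) → Z) k') θ'
      ∂(Measure.pi fun _ : Fin m => νZ) ∂νΘ)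
      = η θ * μ z1 * h y z1 θ := by
  have hsum : ∀ (θ' : Θ) (t : Fin m → Z),
      (∑ k : Fin (m + 1),
          η θ * μ z1 * h y z1 θ * q θ θ' * (∏ i, R z1 (t i)) *
            h y ((Fin.cons z1 t : Fin (m + 1) → Z) k) θ' /
              ∑ k' : Fin (m + 1), h y ((Fin.cons z1 t : Fin (m + 1) → Z) k') θ')
        = η θ * μ z1 * h y z1 θ * q θ θ' * (∏ i, R z1 (t i)) := by
    intro θ' t
    have hS : (0 : ℝ) < ∑ k' : Fin (m + 1), h y ((Fin.cons z1 t : Fin (m + 1) → Z) k') θ' :=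
      Finset.sum_pos (fun k _ => hpos y _ θ') Finset.univ_nonempty
    rw [← Finset.sum_div, ← Finset.mul_sum, mul_div_assoc, div_self hS.ne', mul_one]
  simp_rw [hsum]
  letI : MeasureSpace Z := ⟨νZ⟩
  have key : ∀ θ', (∫ t : Fin m → Z,
      η θ * μ z1 * h y z1 θ * q θ θ' * ∏ i, R z1 (t i)
      ∂(Measure.pi fun _ : Fin m => νZ)) = η θ * μ z1 * h y z1 θ * q θ θ' := by
    intro θ'
    rw [MeasureTheory.integral_const_mul]
    have : (∫ t : Fin m → Z, ∏ i, R z1 (t i) ∂(Measure.pi fun _ : Fin m => νZ)) = 1 := by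
      have := MeasureTheory.integral_fintype_prod_eq_prod (𝕜 := ℝ) (ι := Fin m)
        (fun _ (z : Z) => R z1 z) (μ := fun _ => νZ)
      rw [this]
      simp [hR1 z1]
    rw [this, mul_one]
  simp_rw [key]
  rw [MeasureTheory.integral_const_mul, hq1, mul_one]
end

section
/- Let η, q, μ, R, h be as follows: η a positive probability density on Θ, q(θ'|θ) a positive transition density on Θ, h(y|z,θ) a strictly positive function, and suppose the joint density m(z₁,…,z_N) := μ(z₁) ∏_{i=2}^N R(z_i | z₁) is exchangeable, i.e., invariant under every permutation of (z₁,…,z_N). Define π(θ, θ', z₁,…,z_N, k) = η(θ) m(z₁,…,z_N) h(y|z₁,θ) q(θ'|θ) · h(y|z_k,θ') / Σ_{j=1}^N h(y|z_j,θ'). Then for every k ∈ {1,…,N}, writing z̃ for the vector obtained from (z₁,…,z_N) by swapping coordinates 1 and k, the ratio π(θ', θ, z̃, k) / π(θ, θ', z₁,…,z_N, k) equals [q(θ|θ') η(θ') Σ_{j=1}^N h(y|z_j,θ')] / [q(θ'|θ) η(θ) Σ_{j=1}^N h(y|z_j,θ)]. -/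
/-- Acceptance-ratio simplification in the proof of Proposition 1 (with `N + 1 ≥ 1` auxiliary
variables, coordinate `0` playing the role of `z₁`): when the proposal law
`m(z₁,…,z_N) = μ(z₁) ∏_{i≥2} R(z_i|z₁)` is exchangeable, the Metropolis–Hastings acceptance
ratio of the swap move `(θ ↔ θ', z₁ ↔ z_k)` on the extended target reduces to the averaged
acceptance ratio `[q(θ|θ')η(θ') Σ_j h(y|z_j,θ')] / [q(θ'|θ)η(θ) Σ_j h(y|z_j,θ)]`. -/
theorem mhaar_acceptance_ratio
    {Θ Z Y : Type*} (N : ℕ)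
    (η : Θ → ℝ) (q : Θ → Θ → ℝ) (h : Y → Z → Θ → ℝ)
    (μZ : Z → ℝ) (R : Z → Z → ℝ)
    (m : (Fin (N + 1) → Z) → ℝ)
    (hm : ∀ w : Fin (N + 1) → Z, m w = μZ (w 0) * ∏ i : Fin N, R (w 0) (w i.succ))
    (hη : ∀ θ, 0 < η θ) (hq : ∀ θ θ', 0 < q θ θ')
    (hh : ∀ y z θ, 0 < h y z θ)
    (hexch : ∀ (σ : Equiv.Perm (Fin (N + 1))) (w : Fin (N + 1) → Z), m (w ∘ σ) = m w)
    (π : Θ → Θ → (Fin (N + 1) → Z) → Fin (N + 1) → ℝ)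
    (y : Y)
    (hπ : ∀ a b w j, π a b w j =
      η a * m w * h y (w 0) a * q a b * h y (w j) b / ∑ i, h y (w i) b)
    (θ θ' : Θ) (z : Fin (N + 1) → Z) (hmz : m z ≠ 0) (k : Fin (N + 1)) :
    π θ' θ (z ∘ Equiv.swap 0 k) k / π θ θ' z k
      = (q θ' θ * η θ' * ∑ j, h y (z j) θ') / (q θ θ' * η θ * ∑ j, h y (z j) θ) := by
  have hswap : m (z ∘ Equiv.swap 0 k) = m z := hexch _ z
  have hsum : ∀ t, (∑ i, h y ((z ∘ Equiv.swap 0 k) i) t) = ∑ i, h y (z i) t := by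
    intro t
    exact Equiv.sum_comp (Equiv.swap 0 k) (fun i => h y (z i) t)
  have h0 : (z ∘ Equiv.swap 0 k) 0 = z k := by simp
  have hk : (z ∘ Equiv.swap 0 k) k = z 0 := by simp
  have hS : ∀ t, (0:ℝ) < ∑ i, h y (z i) t := fun t =>
    Finset.sum_pos (fun i _ => hh y (z i) t) ⟨0, Finset.mem_univ 0⟩
  rw [hπ, hπ, hswap, hsum, h0, hk]
  have hS1 := (hS θ).ne'
  have hS2 := (hS θ').ne'
  have h1 := (hh y (z 0) θ).ne'
  have h2 := (hh y (z k) θ').ne'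
  have h3 := (hη θ).ne'
  have h4 := (hq θ θ').ne'
  field_simp
end
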